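/- arXiv:2409.04305 — 2 statements merged into one kernel-verified Lean document; each statement's English description precedes it below -/
import Mathlib

section
/- Let t, u be arbitrary real numbers and (κ_{2ℓ})_{ℓ≥1} an arbitrary real sequence; set G(z) := Σ_{ℓ≥1} (κ_{2ℓ}/ℓ) z^{2ℓ} and g(z) := Σ_{ℓ≥1} κ_{2ℓ} z^{2ℓ−1} (so that G'(z)/2 = g(z)). Then for every formal power series h(z) ∈ ℝ[[z]]: ∂_{t,u}( h(z) e^{G(z)} ) = ((∂_{t,u} + *_g)(h(z))) · e^{G(z)} + ([z^0] h(z)) · d_{t,u}( e^{G(z)} ), where d_{t,u} is the unique linear operator on ℝ[[z]] with d_{t,u} z^{2m+1} = (u − 1/2) z^{2m} for m ≥ 0, d_{t,u} z^{2m} = t z^{2m−1} for m ≥ 1, and d_{t,u} 1 = 0. -/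
open Finset

/-- Formal exponential of a power series with zero constant term. -/
noncomputable def fexp (F : PowerSeries ℝ) : PowerSeries ℝ :=
  PowerSeries.mk fun n =>
    ∑ k ∈ Finset.range (n + 1), (PowerSeries.coeff (R := ℝ) n (F ^ k)) / (k.factorial : ℝ)

/-- The series `G(z) = Σ_{ℓ≥1} (κ_{2ℓ}/ℓ) z^{2ℓ}` (where `κ ℓ` stands for `κ_{2ℓ}`). -/
noncomputable def evenSeries (x : ℕ → ℝ) : PowerSeries ℝ :=
  PowerSeries.mk fun j => if j ≠ 0 ∧ j % 2 = 0 then x (j / 2) / ((j / 2 : ℕ) : ℝ) else 0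

/-- The operator `∂_{t,u}` on `ℝ[[z]]`: `∂ z^{2m+1} = (u+m) z^{2m}`, `∂ z^{2m} = (t+m) z^{2m-1}`,
`∂ 1 = 0`. -/
noncomputable def partialTU (t u : ℝ) (f : PowerSeries ℝ) : PowerSeries ℝ :=
  PowerSeries.mk fun j =>
    if j % 2 = 0 then (u + (j / 2 : ℕ)) * PowerSeries.coeff (R := ℝ) (j + 1) f
    else (t + ((j + 1) / 2 : ℕ)) * PowerSeries.coeff (R := ℝ) (j + 1) f

/-- The operator `d_{t,u}` on `ℝ[[z]]`: `d z^{2m+1} = (u - 1/2) z^{2m}`, `d z^{2m} = t z^{2m-1}`,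
`d 1 = 0`. -/
noncomputable def dTU (t u : ℝ) (f : PowerSeries ℝ) : PowerSeries ℝ :=
  PowerSeries.mk fun j =>
    if j % 2 = 0 then (u - 1 / 2) * PowerSeries.coeff (R := ℝ) (j + 1) f
    else t * PowerSeries.coeff (R := ℝ) (j + 1) f

/-- The series `g(z) = Σ_{ℓ≥1} κ_{2ℓ} z^{2ℓ-1}` (where `κ ℓ` stands for `κ_{2ℓ}`). -/
noncomputable def gSeries (κ : ℕ → ℝ) : PowerSeries ℝ :=
  PowerSeries.mk fun j => if j % 2 = 1 then κ ((j + 1) / 2) else 0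


open PowerSeries

/-- Auxiliary: partial sums of the exponential series. -/
noncomputable def fexpPart (F : PowerSeries ℝ) (N : ℕ) : PowerSeries ℝ :=
  ∑ k ∈ Finset.range (N + 1), ((k.factorial : ℝ))⁻¹ • F ^ k

lemma coeff_fexp_eq (F : PowerSeries ℝ) (hF : PowerSeries.constantCoeff (R := ℝ) F = 0)
    {i N : ℕ} (hiN : i ≤ N) :
    PowerSeries.coeff (R := ℝ) i (fexp F) = PowerSeries.coeff (R := ℝ) i (fexpPart F N) := by
  rw [fexp, PowerSeries.coeff_mk, fexpPart, map_sum]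
  rw [← Finset.sum_range_add_sum_Ico _ (Nat.succ_le_succ hiN)]
  have h2 : ∀ k ∈ Finset.Ico (i+1) (N+1),
      PowerSeries.coeff (R := ℝ) i (((k.factorial : ℝ))⁻¹ • F ^ k) = 0 := by
    intro k hk
    rw [Finset.mem_Ico] at hk
    have hdvd : (PowerSeries.X : PowerSeries ℝ) ^ k ∣ F ^ k :=
      pow_dvd_pow_of_dvd (PowerSeries.X_dvd_iff.mpr hF) k
    have : PowerSeries.coeff (R := ℝ) i (F ^ k) = 0 := by
      rw [PowerSeries.X_pow_dvd_iff] at hdvd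
      exact hdvd i (Nat.lt_of_succ_le hk.1)
    rw [map_smul, this, smul_zero]
  rw [Finset.sum_eq_zero h2, add_zero]
  refine Finset.sum_congr rfl fun k _ => ?_
  rw [map_smul, smul_eq_mul, div_eq_inv_mul]

lemma coeff_mul_congr (A B H : PowerSeries ℝ) (n : ℕ)
    (hAB : ∀ i ≤ n, PowerSeries.coeff (R := ℝ) i A = PowerSeries.coeff (R := ℝ) i B) :
    PowerSeries.coeff (R := ℝ) n (H * A) = PowerSeries.coeff (R := ℝ) n (H * B) := by
  rw [PowerSeries.coeff_mul, PowerSeries.coeff_mul]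
  refine Finset.sum_congr rfl fun p hp => ?_
  rw [Finset.HasAntidiagonal.mem_antidiagonal] at hp
  rw [hAB p.2 (by omega)]

lemma derivative_fexpPart (F : PowerSeries ℝ) (N : ℕ) :
    d⁄dX ℝ (fexpPart F (N + 1)) = d⁄dX ℝ F * fexpPart F N := by
  rw [fexpPart, map_sum, Finset.sum_range_succ']
  have h0 : d⁄dX ℝ (((Nat.factorial 0 : ℝ))⁻¹ • F ^ 0) = 0 := by
    simp
  rw [h0, add_zero, fexpPart, Finset.mul_sum]
  refine Finset.sum_congr rfl fun k _ => ?_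
  rw [Derivation.map_smul, Derivation.leibniz_pow, Nat.succ_sub_one,
    ← Nat.cast_smul_eq_nsmul ℝ, smul_smul]
  have hfac : ((k+1).factorial : ℝ)⁻¹ * ((k+1 : ℕ) : ℝ) = (k.factorial : ℝ)⁻¹ := by
    rw [Nat.factorial_succ]
    push_cast
    rw [mul_inv]
    have h1 : ((k:ℝ) + 1) ≠ 0 := by positivity
    field_simp
  rw [hfac, smul_eq_mul, mul_smul_comm, mul_comm (F ^ k)]

lemma derivative_fexp (F : PowerSeries ℝ) (hF : PowerSeries.constantCoeff (R := ℝ) F = 0) :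
    d⁄dX ℝ (fexp F) = d⁄dX ℝ F * fexp F := by
  ext n
  rw [PowerSeries.coeff_derivative, coeff_fexp_eq F hF (le_refl (n+1)),
    ← PowerSeries.coeff_derivative, derivative_fexpPart]
  exact coeff_mul_congr (fexpPart F n) (fexp F) (d⁄dX ℝ F) n
    (fun i hi => (coeff_fexp_eq F hF hi).symm)

/-- A series is even if odd coefficients vanish. -/
def EvenPS (F : PowerSeries ℝ) : Prop := ∀ j, j % 2 = 1 → PowerSeries.coeff (R := ℝ) j F = 0

lemma evenPS_evenSeries (κ : ℕ → ℝ) : EvenPS (evenSeries κ) := by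
  intro j hj
  rw [evenSeries, PowerSeries.coeff_mk, if_neg]
  omega

lemma evenPS_mul {A B : PowerSeries ℝ} (hA : EvenPS A) (hB : EvenPS B) :
    EvenPS (A * B) := by
  intro j hj
  rw [PowerSeries.coeff_mul]
  refine Finset.sum_eq_zero fun p hp => ?_
  rw [Finset.HasAntidiagonal.mem_antidiagonal] at hp
  rcases Nat.mod_two_eq_zero_or_one p.1 with h1 | h1
  · have : p.2 % 2 = 1 := by omega
    rw [hB p.2 this, mul_zero]
  · rw [hA p.1 h1, zero_mul]

lemma evenPS_pow {A : PowerSeries ℝ} (hA : EvenPS A) (k : ℕ) : EvenPS (A ^ k) := by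
  induction k with
  | zero => intro j hj; rw [pow_zero, PowerSeries.coeff_one, if_neg (by omega)]
  | succ k ih => rw [pow_succ]; exact evenPS_mul ih hA

lemma evenPS_fexp {F : PowerSeries ℝ} (hF : EvenPS F) : EvenPS (fexp F) := by
  intro j hj
  rw [fexp, PowerSeries.coeff_mk]
  refine Finset.sum_eq_zero fun k _ => ?_
  rw [evenPS_pow hF k j hj, zero_div]

lemma coeff_dTU (t u : ℝ) (f : PowerSeries ℝ) (j : ℕ) :
    PowerSeries.coeff (R := ℝ) j (dTU t u f) =
      (if j % 2 = 0 then u - 1/2 else t) * PowerSeries.coeff (R := ℝ) (j+1) f := by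
  rw [dTU, PowerSeries.coeff_mk]
  split_ifs <;> rfl

/-- Leibniz rule for `dTU` against an even series. -/
lemma dTU_mul_even (t u : ℝ) (f F : PowerSeries ℝ) (hF : EvenPS F) :
    dTU t u (f * F) = dTU t u f * F +
      PowerSeries.C (R := ℝ) (PowerSeries.constantCoeff (R := ℝ) f) * dTU t u F := by
  ext j
  rw [coeff_dTU, map_add, PowerSeries.coeff_mul, PowerSeries.coeff_C_mul, coeff_dTU,
    PowerSeries.coeff_mul, Finset.Nat.sum_antidiagonal_succ]
  have key : ∀ p ∈ Finset.HasAntidiagonal.antidiagonal j,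
      PowerSeries.coeff (R := ℝ) p.1 (dTU t u f) * PowerSeries.coeff (R := ℝ) p.2 F
      = (if j % 2 = 0 then u - 1/2 else t) *
          (PowerSeries.coeff (R := ℝ) (p.1+1) f * PowerSeries.coeff (R := ℝ) p.2 F) := by
    intro p hp
    rw [Finset.HasAntidiagonal.mem_antidiagonal] at hp
    rw [coeff_dTU]
    rcases Nat.mod_two_eq_zero_or_one p.2 with h2 | h2
    · have hpar : p.1 % 2 = j % 2 := by omega
      rw [hpar]
      ring
    · rw [hF p.2 h2, mul_zero, mul_zero, mul_zero]
  rw [Finset.sum_congr rfl key, ← Finset.mul_sum,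
    PowerSeries.coeff_zero_eq_constantCoeff]
  ring

lemma coeff_partialTU (t u : ℝ) (f : PowerSeries ℝ) (j : ℕ) :
    PowerSeries.coeff (R := ℝ) j (partialTU t u f) =
      (if j % 2 = 0 then u + ((j / 2 : ℕ) : ℝ) else t + (((j + 1) / 2 : ℕ) : ℝ)) *
        PowerSeries.coeff (R := ℝ) (j+1) f := by
  rw [partialTU, PowerSeries.coeff_mk]
  split_ifs <;> rfl

lemma partialTU_eq (t u : ℝ) (f : PowerSeries ℝ) :
    partialTU t u f = PowerSeries.C (R := ℝ) (1/2) * d⁄dX ℝ f + dTU t u f := by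
  ext j
  rw [coeff_partialTU, map_add, PowerSeries.coeff_C_mul, PowerSeries.coeff_derivative,
    coeff_dTU]
  rcases Nat.mod_two_eq_zero_or_one j with hj | hj
  · rw [if_pos hj, if_pos hj]
    obtain ⟨m, rfl⟩ : ∃ m, j = 2 * m := ⟨j / 2, by omega⟩
    have h1 : (2 * m) / 2 = m := by omega
    rw [h1]
    push_cast
    ring
  · rw [if_neg (by omega), if_neg (by omega)]
    obtain ⟨m, rfl⟩ : ∃ m, j = 2 * m + 1 := ⟨j / 2, by omega⟩
    have h1 : (2 * m + 1 + 1) / 2 = m + 1 := by omega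
    rw [h1]
    push_cast
    ring

lemma coeff_gSeries (κ : ℕ → ℝ) (j : ℕ) :
    PowerSeries.coeff (R := ℝ) j (gSeries κ) =
      if j % 2 = 1 then κ ((j + 1) / 2) else 0 := by
  rw [gSeries, PowerSeries.coeff_mk]

lemma two_mul_gSeries (κ : ℕ → ℝ) :
    d⁄dX ℝ (evenSeries κ) = PowerSeries.C (R := ℝ) 2 * gSeries κ := by
  ext j
  rw [PowerSeries.coeff_derivative, PowerSeries.coeff_C_mul, coeff_gSeries,
    evenSeries, PowerSeries.coeff_mk]
  rcases Nat.mod_two_eq_zero_or_one j with hj | hj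
  · rw [if_neg (by omega), if_neg (by omega), zero_mul, mul_zero]
  · rw [if_pos (by omega), if_pos (by omega)]
    obtain ⟨m, rfl⟩ : ∃ m, j = 2 * m + 1 := ⟨j / 2, by omega⟩
    have h1 : (2 * m + 1 + 1) / 2 = m + 1 := by omega
    rw [h1]
    have hm : ((m : ℝ) + 1) ≠ 0 := by positivity
    push_cast
    field_simp
    ring

lemma constantCoeff_evenSeries (κ : ℕ → ℝ) :
    PowerSeries.constantCoeff (R := ℝ) (evenSeries κ) = 0 := by
  rw [← PowerSeries.coeff_zero_eq_constantCoeff, evenSeries, PowerSeries.coeff_mk]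
  simp

/-- Claim 3.6: the modified Leibniz rule
`∂_{t,u}(h e^G) = ((∂_{t,u} + *_g) h) e^G + ([z^0]h) · d_{t,u}(e^G)`. -/
theorem partialTU_mul_fexp (t u : ℝ) (κ : ℕ → ℝ) (h : PowerSeries ℝ) :
    partialTU t u (h * fexp (evenSeries κ)) =
      (partialTU t u h + gSeries κ * h) * fexp (evenSeries κ) +
        PowerSeries.C (R := ℝ) (PowerSeries.constantCoeff (R := ℝ) h) *
          dTU t u (fexp (evenSeries κ)) := by
  have hG0 := constantCoeff_evenSeries κ
  have hE : EvenPS (fexp (evenSeries κ)) := evenPS_fexp (evenPS_evenSeries κ)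
  have h2 : PowerSeries.C (R := ℝ) (1/2) * PowerSeries.C (R := ℝ) 2 = 1 := by
    rw [← map_mul]
    norm_num
  rw [partialTU_eq t u (h * fexp (evenSeries κ)), Derivation.leibniz,
    derivative_fexp _ hG0, two_mul_gSeries,
    dTU_mul_even t u h (fexp (evenSeries κ)) hE, partialTU_eq t u h,
    smul_eq_mul, smul_eq_mul]
  linear_combination (h * gSeries κ * fexp (evenSeries κ)) * h2
end

section
/- Let n ≥ 0 and d ≥ 1 be integers, and let T be the linear operator on ℝ[x] determined by T x^i = i(i+n) x^{i−1} for i ≥ 0 (i.e., T f = x^{−n}·(x^{n+1} f′)′, which maps polynomials to polynomials and lowers degree by 1). Then: (i) T^k x^i = (−i)_k (−i−n)_k x^{i−k} for all 0 ≤ k ≤ i; and (ii) if p(x) = x^d + Σ_{k=1}^d a_{2k} x^{d−k} and r(x) = x^d + Σ_{k=1}^d b_{2k} x^{d−k} are monic of degree d, and P(y) := Σ_{k=0}^d (a_{2k}/((−d)_k(−d−n)_k)) y^k and R(y) := Σ_{k=0}^d (b_{2k}/((−d)_k(−d−n)_k)) y^k (with a_0 = b_0 := 1), so that p = P(T) x^d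 and r = R(T) x^d, then (p ⊞^n_d r)(x) = P(T) R(T) x^d = P(T) r(x) = R(T) p(x). -/
open Finset Polynomial

/-- Pochhammer symbol `(v)_k = v (v+1) ⋯ (v+k-1)`. -/
noncomputable def pochEval (v : ℝ) (k : ℕ) : ℝ := (ascPochhammer ℝ k).eval v

/-- The operator `T = x^{-n} D x^{n+1} D` on `ℝ[x]`, determined by
`T x^i = i (i+n) x^{i-1}` for all `i ≥ 0`. -/
noncomputable def Trect (n : ℕ) (p : Polynomial ℝ) : Polynomial ℝ :=
  ∑ i ∈ Finset.range (p.natDegree + 1),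
    Polynomial.C (p.coeff i * (i : ℝ) * ((i : ℝ) + (n : ℝ))) * Polynomial.X ^ (i - 1)

/-- The monic polynomial `x^d + Σ_{k=1}^d a_{2k} x^{d-k}` (where `a k` stands for `a_{2k}`). -/
noncomputable def monicFromCoeffs (d : ℕ) (a : ℕ → ℝ) : Polynomial ℝ :=
  Polynomial.X ^ d + ∑ k ∈ Finset.Icc 1 d, Polynomial.C (a k) * Polynomial.X ^ (d - k)

/-- The operator `P(T)` where `P(y) = Σ_{k=0}^d (a_{2k}/((-d)_k (-d-n)_k)) y^k`, `a_0 = 1`. -/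
noncomputable def applyPT (n d : ℕ) (a : ℕ → ℝ) (q : Polynomial ℝ) : Polynomial ℝ :=
  ∑ k ∈ Finset.range (d + 1),
    Polynomial.C ((if k = 0 then 1 else a k) /
        (pochEval (-(d : ℝ)) k * pochEval (-(d : ℝ) - (n : ℝ)) k)) * (Trect n)^[k] q

/-- The coefficient sequence of the `(n,d)`-rectangular convolution `p ⊞^n_d r`. -/
noncomputable def rectConvCoeff (n d : ℕ) (a b : ℕ → ℝ) (k : ℕ) : ℝ :=
  ∑ i ∈ Finset.range (k + 1),
    (((d - i).factorial : ℝ) * ((d - (k - i)).factorial : ℝ) /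
        ((d.factorial : ℝ) * ((d - k).factorial : ℝ))) *
      (((n + d - i).factorial : ℝ) * ((n + d - (k - i)).factorial : ℝ) /
        (((n + d).factorial : ℝ) * ((n + d - k).factorial : ℝ))) *
      ((if i = 0 then 1 else a i) * (if k - i = 0 then 1 else b (k - i)))

lemma pochEval_zero (v : ℝ) : pochEval v 0 = 1 := by simp [pochEval]

lemma pochEval_succ (v : ℝ) (k : ℕ) : pochEval v (k + 1) = pochEval v k * (v + k) := by
  simp [pochEval, ascPochhammer_succ_right]

lemma pochEval_neg_nat (m : ℕ) : ∀ k, k ≤ m →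
    pochEval (-(m : ℝ)) k = (-1) ^ k * (m.factorial : ℝ) / ((m - k).factorial : ℝ) := by
  intro k
  induction k with
  | zero => intro _; simp [pochEval_zero, Nat.factorial_ne_zero]
  | succ k ih =>
    intro hk
    have hk' : k ≤ m := by omega
    rw [pochEval_succ, ih hk']
    have h1 : m - k = (m - (k + 1)) + 1 := by omega
    have h2 : (-(m : ℝ) + k) = -((m - k : ℕ) : ℝ) := by
      rw [Nat.cast_sub hk']; ring
    rw [h2, h1, Nat.factorial_succ]
    rw [← h1, Nat.cast_mul]
    have h4 : ((m - k : ℕ) : ℝ) ≠ 0 := by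
      have h5 : 0 < m - k := by omega
      exact_mod_cast h5.ne'
    have h6 : (((m - (k+1)).factorial : ℕ) : ℝ) ≠ 0 := by
      exact_mod_cast Nat.factorial_ne_zero _
    have key : ∀ A c F : ℝ, c ≠ 0 → F ≠ 0 →
        (-1) ^ k * A / (c * F) * -c = (-1) ^ (k + 1) * A / F := by
      intro A c F hc hF
      field_simp
      ring
    exact key _ _ _ h4 h6

lemma factorial_cast_ne_zero (m : ℕ) : ((m.factorial : ℝ)) ≠ 0 := by
  exact_mod_cast Nat.factorial_ne_zero m

lemma pochEval_neg_nat_ne_zero (m k : ℕ) (h : k ≤ m) : pochEval (-(m : ℝ)) k ≠ 0 := by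
  rw [pochEval_neg_nat m k h]
  apply div_ne_zero
  · exact mul_ne_zero (by positivity) (factorial_cast_ne_zero m)
  · exact factorial_cast_ne_zero _

lemma Trect_eq (n N : ℕ) (p : Polynomial ℝ) (h : p.natDegree < N) :
    Trect n p = ∑ i ∈ Finset.range N,
      Polynomial.C (p.coeff i * (i : ℝ) * ((i : ℝ) + (n : ℝ))) * Polynomial.X ^ (i - 1) := by
  unfold Trect
  apply Finset.sum_subset
  · exact Finset.range_subset.2 (fun x hx => Finset.mem_range.2 (by omega))
  · intro x _ hx
    have : p.natDegree < x := by
      simp only [Finset.mem_range] at hx; omega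
    rw [Polynomial.coeff_eq_zero_of_natDegree_lt this]
    simp

lemma Trect_zero (n : ℕ) : Trect n 0 = 0 := by
  unfold Trect; simp

lemma Trect_add (n : ℕ) (p q : Polynomial ℝ) : Trect n (p + q) = Trect n p + Trect n q := by
  set N := max p.natDegree q.natDegree + 1 with hN
  have hp : p.natDegree < N := by omega
  have hq : q.natDegree < N := by omega
  have hpq : (p + q).natDegree < N := by
    have := Polynomial.natDegree_add_le p q
    omega
  rw [Trect_eq n N p hp, Trect_eq n N q hq, Trect_eq n N (p + q) hpq,
    ← Finset.sum_add_distrib]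
  refine Finset.sum_congr rfl fun i _ => ?_
  rw [Polynomial.coeff_add]
  rw [← add_mul]
  congr 1
  rw [← Polynomial.C_add]
  ring_nf

lemma Trect_C_mul (n : ℕ) (c : ℝ) (p : Polynomial ℝ) :
    Trect n (Polynomial.C c * p) = Polynomial.C c * Trect n p := by
  have h : (Polynomial.C c * p).natDegree < p.natDegree + 1 :=
    Nat.lt_succ_of_le (Polynomial.natDegree_C_mul_le c p)
  rw [Trect_eq n (p.natDegree + 1) _ h]
  unfold Trect
  rw [Finset.mul_sum]
  refine Finset.sum_congr rfl fun i _ => ?_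
  rw [Polynomial.coeff_C_mul, ← mul_assoc, ← Polynomial.C_mul, mul_assoc, mul_assoc]
  ring_nf

lemma Trect_X_pow (n i : ℕ) :
    Trect n (Polynomial.X ^ i : Polynomial ℝ) =
      Polynomial.C ((i : ℝ) * ((i : ℝ) + (n : ℝ))) * Polynomial.X ^ (i - 1) := by
  unfold Trect
  rw [Polynomial.natDegree_X_pow]
  rw [Finset.sum_eq_single i]
  · simp [Polynomial.coeff_X_pow]
  · intro j _ hj
    simp [Polynomial.coeff_X_pow, hj]
  · intro h
    simp at h

lemma Trect_iter_zero (n k : ℕ) : (Trect n)^[k] 0 = 0 := by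
  induction k with
  | zero => rfl
  | succ k ih => rw [Function.iterate_succ_apply, Trect_zero, ih]

lemma Trect_iter_add (n k : ℕ) (p q : Polynomial ℝ) :
    (Trect n)^[k] (p + q) = (Trect n)^[k] p + (Trect n)^[k] q := by
  induction k generalizing p q with
  | zero => rfl
  | succ k ih => rw [Function.iterate_succ_apply, Trect_add, ih,
      Function.iterate_succ_apply, Function.iterate_succ_apply]

lemma Trect_iter_C_mul (n k : ℕ) (c : ℝ) (p : Polynomial ℝ) :
    (Trect n)^[k] (Polynomial.C c * p) = Polynomial.C c * (Trect n)^[k] p := by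
  induction k generalizing p with
  | zero => rfl
  | succ k ih => rw [Function.iterate_succ_apply, Trect_C_mul, ih,
      Function.iterate_succ_apply]

lemma Trect_iter_sum {α : Type*} [DecidableEq α] (n k : ℕ) (s : Finset α) (f : α → Polynomial ℝ) :
    (Trect n)^[k] (∑ x ∈ s, f x) = ∑ x ∈ s, (Trect n)^[k] (f x) := by
  induction s using Finset.induction_on with
  | empty => simp [Trect_iter_zero]
  | insert x s h ih => rw [Finset.sum_insert h, Trect_iter_add, ih, Finset.sum_insert h]

lemma Trect_iter_X_pow_le (n : ℕ) : ∀ k i : ℕ, k ≤ i →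
    (Trect n)^[k] (Polynomial.X ^ i : Polynomial ℝ) =
      Polynomial.C (pochEval (-(i : ℝ)) k * pochEval (-(i : ℝ) - (n : ℝ)) k) *
        Polynomial.X ^ (i - k) := by
  intro k
  induction k with
  | zero => intro i _; simp [pochEval_zero]
  | succ k ih =>
    intro i hk
    have hk' : k ≤ i := by omega
    rw [Function.iterate_succ_apply', ih i hk', Trect_C_mul, Trect_X_pow,
      ← mul_assoc, ← Polynomial.C_mul]
    have he : i - k - 1 = i - (k + 1) := by omega
    rw [he]
    congr 1
    rw [pochEval_succ, pochEval_succ]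
    have h1 : ((i - k : ℕ) : ℝ) = (i : ℝ) - (k : ℝ) := by
      rw [Nat.cast_sub hk']
    rw [h1]
    ring

lemma Trect_iter_X_pow_gt (n k i : ℕ) (h : i < k) :
    (Trect n)^[k] (Polynomial.X ^ i : Polynomial ℝ) = 0 := by
  have hsplit : k = (k - (i + 1)) + (i + 1) := by omega
  rw [hsplit, Function.iterate_add_apply]
  have h1 : (Trect n)^[i + 1] (Polynomial.X ^ i : Polynomial ℝ) = 0 := by
    rw [Function.iterate_succ_apply', Trect_iter_X_pow_le n i i le_rfl]
    simp only [Nat.sub_self, pow_zero, mul_one]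
    have heq : (Polynomial.C (pochEval (-(i : ℝ)) i * pochEval (-(i : ℝ) - (n : ℝ)) i)
        : Polynomial ℝ) = Polynomial.C (pochEval (-(i : ℝ)) i * pochEval (-(i : ℝ) - (n : ℝ)) i)
          * Polynomial.X ^ 0 := by rw [pow_zero, mul_one]
    rw [heq, Trect_C_mul, Trect_X_pow]
    simp
  rw [h1, Trect_iter_zero]

lemma neg_sub_cast (n d : ℕ) : -(d : ℝ) - (n : ℝ) = -((n + d : ℕ) : ℝ) := by
  push_cast; ring

lemma poch_prod_ne_zero (n d k : ℕ) (h : k ≤ d) :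
    pochEval (-(d : ℝ)) k * pochEval (-(d : ℝ) - (n : ℝ)) k ≠ 0 := by
  rw [neg_sub_cast]
  exact mul_ne_zero (pochEval_neg_nat_ne_zero d k h)
    (pochEval_neg_nat_ne_zero (n + d) k (by omega))

lemma sum_range_split {M : Type*} [AddCommMonoid M] (d : ℕ) (f : ℕ → M) :
    ∑ k ∈ Finset.range (d + 1), f k = f 0 + ∑ k ∈ Finset.Icc 1 d, f k := by
  have h1 : Finset.range (d + 1) = Finset.Ico 0 (d + 1) := by
    rw [Finset.range_eq_Ico]
  have h2 : Finset.Icc 1 d = Finset.Ico 1 (d + 1) := by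
    ext x; simp only [Finset.mem_Icc, Finset.mem_Ico]; omega
  rw [h1, h2, Finset.sum_eq_sum_Ico_succ_bot (by omega)]

lemma applyPT_X_pow (n d : ℕ) (a : ℕ → ℝ) :
    applyPT n d a (Polynomial.X ^ d) = monicFromCoeffs d a := by
  unfold applyPT monicFromCoeffs
  have step : ∀ k ∈ Finset.range (d + 1),
      Polynomial.C ((if k = 0 then 1 else a k) /
          (pochEval (-(d : ℝ)) k * pochEval (-(d : ℝ) - (n : ℝ)) k)) *
        (Trect n)^[k] (Polynomial.X ^ d : Polynomial ℝ)
      = Polynomial.C (if k = 0 then 1 else a k) * Polynomial.X ^ (d - k) := by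
    intro k hk
    have hkd : k ≤ d := by simp at hk; omega
    rw [Trect_iter_X_pow_le n k d hkd, ← mul_assoc, ← Polynomial.C_mul,
      div_mul_cancel₀ _ (poch_prod_ne_zero n d k hkd)]
  refine (Finset.sum_congr rfl step).trans ?_
  rw [sum_range_split d (fun k => Polynomial.C (if k = 0 then 1 else a k) * Polynomial.X ^ (d - k))]
  congr 1
  · norm_num
  apply Finset.sum_congr rfl
  intro k hk
  have hknz : k ≠ 0 := by simp at hk; omega
  rw [if_neg hknz]

lemma coeff_identity (n d k j : ℕ) (h : k + j ≤ d) :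
    pochEval (-(((d - j) : ℕ) : ℝ)) k * pochEval (-(((d - j) : ℕ) : ℝ) - (n : ℝ)) k /
      (pochEval (-(d : ℝ)) k * pochEval (-(d : ℝ) - (n : ℝ)) k)
    = (((d - k).factorial : ℝ) * ((d - j).factorial : ℝ) /
        ((d.factorial : ℝ) * ((d - (k + j)).factorial : ℝ))) *
      (((n + d - k).factorial : ℝ) * ((n + d - j).factorial : ℝ) /
        (((n + d).factorial : ℝ) * ((n + d - (k + j)).factorial : ℝ))) := by
  have hkd : k ≤ d := by omega
  have hkdj : k ≤ d - j := by omega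
  have e1 : pochEval (-(d : ℝ)) k = (-1) ^ k * (d.factorial : ℝ) / ((d - k).factorial : ℝ) :=
    pochEval_neg_nat d k hkd
  have e2 : pochEval (-(d : ℝ) - (n : ℝ)) k
      = (-1) ^ k * ((n + d).factorial : ℝ) / ((n + d - k).factorial : ℝ) := by
    rw [neg_sub_cast, pochEval_neg_nat (n + d) k (by omega)]
  have e3 : pochEval (-(((d - j) : ℕ) : ℝ)) k
      = (-1) ^ k * ((d - j).factorial : ℝ) / ((d - (k + j)).factorial : ℝ) := by
    rw [pochEval_neg_nat (d - j) k hkdj]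
    have : d - j - k = d - (k + j) := by omega
    rw [this]
  have e4 : pochEval (-(((d - j) : ℕ) : ℝ) - (n : ℝ)) k
      = (-1) ^ k * ((n + d - j).factorial : ℝ) / ((n + d - (k + j)).factorial : ℝ) := by
    rw [neg_sub_cast n (d - j), pochEval_neg_nat (n + (d - j)) k (by omega)]
    have h1 : n + (d - j) = n + d - j := by omega
    rw [h1]
    have h2 : n + d - j - k = n + d - (k + j) := by omega
    rw [h2]
  rw [e1, e2, e3, e4]
  have f1 := factorial_cast_ne_zero (d - k)
  have f2 := factorial_cast_ne_zero (d - j)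
  have f3 := factorial_cast_ne_zero d
  have f4 := factorial_cast_ne_zero (d - (k + j))
  have f5 := factorial_cast_ne_zero (n + d - k)
  have f6 := factorial_cast_ne_zero (n + d - j)
  have f7 := factorial_cast_ne_zero (n + d)
  have f8 := factorial_cast_ne_zero (n + d - (k + j))
  have fs : ((-1 : ℝ)) ^ k ≠ 0 := by positivity
  field_simp

lemma monic_as_sum (d : ℕ) (b : ℕ → ℝ) :
    monicFromCoeffs d b = ∑ j ∈ Finset.range (d + 1),
      Polynomial.C (if j = 0 then 1 else b j) * Polynomial.X ^ (d - j) := by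
  rw [sum_range_split d
    (fun j => Polynomial.C (if j = 0 then 1 else b j) * Polynomial.X ^ (d - j))]
  unfold monicFromCoeffs
  congr 1
  · norm_num
  apply Finset.sum_congr rfl
  intro k hk
  have hknz : k ≠ 0 := by simp at hk; omega
  rw [if_neg hknz]

lemma rectConvCoeff_zero (n d : ℕ) (a b : ℕ → ℝ) : rectConvCoeff n d a b 0 = 1 := by
  unfold rectConvCoeff
  simp [Nat.factorial_ne_zero, div_self, factorial_cast_ne_zero]

lemma applyPT_monic (n d : ℕ) (a b : ℕ → ℝ) :
    applyPT n d a (monicFromCoeffs d b) = monicFromCoeffs d (rectConvCoeff n d a b) := by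
  unfold applyPT
  rw [monic_as_sum d b, monic_as_sum d (rectConvCoeff n d a b)]
  -- Step 1: expand each term into a double sum with truncated inner range
  have step1 : ∀ k ∈ Finset.range (d + 1),
      Polynomial.C ((if k = 0 then 1 else a k) /
          (pochEval (-(d : ℝ)) k * pochEval (-(d : ℝ) - (n : ℝ)) k)) *
        (Trect n)^[k] (∑ j ∈ Finset.range (d + 1),
          Polynomial.C (if j = 0 then 1 else b j) * Polynomial.X ^ (d - j))
      = ∑ j ∈ Finset.range (d + 1 - k),
          Polynomial.C ((if k = 0 then 1 else a k) /
              (pochEval (-(d : ℝ)) k * pochEval (-(d : ℝ) - (n : ℝ)) k)) *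
            (Polynomial.C (if j = 0 then 1 else b j) *
              (Trect n)^[k] (Polynomial.X ^ (d - j) : Polynomial ℝ)) := by
    intro k hk
    have hkd : k ≤ d := by simp at hk; omega
    rw [Trect_iter_sum, Finset.mul_sum]
    have inner : ∀ j ∈ Finset.range (d + 1),
        Polynomial.C ((if k = 0 then 1 else a k) /
            (pochEval (-(d : ℝ)) k * pochEval (-(d : ℝ) - (n : ℝ)) k)) *
          (Trect n)^[k] (Polynomial.C (if j = 0 then 1 else b j) * Polynomial.X ^ (d - j))
        = Polynomial.C ((if k = 0 then 1 else a k) /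
            (pochEval (-(d : ℝ)) k * pochEval (-(d : ℝ) - (n : ℝ)) k)) *
          (Polynomial.C (if j = 0 then 1 else b j) *
            (Trect n)^[k] (Polynomial.X ^ (d - j) : Polynomial ℝ)) := by
      intro j _
      rw [Trect_iter_C_mul]
    refine (Finset.sum_congr rfl inner).trans ?_
    symm
    apply Finset.sum_subset
    · apply Finset.range_subset.2; intro x hx; rw [Finset.mem_range]; omega
    · intro j hj hj2
      have hlt : d - j < k := by simp at hj hj2; omega
      rw [Trect_iter_X_pow_gt n k (d - j) hlt]
      simp
  refine (Finset.sum_congr rfl step1).trans ?_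
  -- Step 2: flip the triangle
  rw [← Finset.sum_range_diag_flip (d + 1) (fun k j =>
    Polynomial.C ((if k = 0 then 1 else a k) /
        (pochEval (-(d : ℝ)) k * pochEval (-(d : ℝ) - (n : ℝ)) k)) *
      (Polynomial.C (if j = 0 then 1 else b j) *
        (Trect n)^[k] (Polynomial.X ^ (d - j) : Polynomial ℝ)))]
  -- Step 3: identify each diagonal sum with a coefficient of the convolution
  apply Finset.sum_congr rfl
  intro m hm
  have hmd : m ≤ d := by simp at hm; omega
  have hifm : (if m = 0 then (1 : ℝ) else rectConvCoeff n d a b m) = rectConvCoeff n d a b m := by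
    by_cases hm0 : m = 0
    · rw [if_pos hm0, hm0, rectConvCoeff_zero]
    · rw [if_neg hm0]
  rw [hifm]
  unfold rectConvCoeff
  rw [map_sum, Finset.sum_mul]
  apply Finset.sum_congr rfl
  intro k hk
  have hkm : k ≤ m := by simp at hk; omega
  have hkdj : k ≤ d - (m - k) := by omega
  rw [Trect_iter_X_pow_le n k (d - (m - k)) hkdj]
  have hexp : d - (m - k) - k = d - m := by omega
  rw [hexp]
  rw [← mul_assoc, ← mul_assoc, ← Polynomial.C_mul, ← Polynomial.C_mul]
  congr 1
  have hid := coeff_identity n d k (m - k) (by omega)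
  have hkj : k + (m - k) = m := by omega
  rw [hkj] at hid
  rw [← hid]
  ring

lemma rectConvCoeff_symm (n d : ℕ) (a b : ℕ → ℝ) (k : ℕ) :
    rectConvCoeff n d a b k = rectConvCoeff n d b a k := by
  unfold rectConvCoeff
  conv_rhs => rw [← Finset.sum_range_reflect]
  apply Finset.sum_congr rfl
  intro i hi
  have hik : i ≤ k := by simp at hi; omega
  have h2 : k + 1 - 1 - i = k - i := by omega
  rw [h2]
  have h3 : k - (k - i) = i := by omega
  rw [h3]
  ring

/-- Eqns. (5.7)–(5.9): (i) `T^k x^i = (-i)_k (-i-n)_k x^{i-k}` for `k ≤ i`; and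
(ii) writing `p = P(T) x^d` and `r = R(T) x^d` for monic `p, r` of degree `d`, the
`(n,d)`-rectangular convolution is `p ⊞^n_d r = P(T) R(T) x^d = P(T) r = R(T) p`. -/
theorem rectangular_convolution_operator (n d : ℕ) (hd : 1 ≤ d) (a b : ℕ → ℝ) :
    (∀ i k : ℕ, k ≤ i →
      (Trect n)^[k] (Polynomial.X ^ i) =
        Polynomial.C (pochEval (-(i : ℝ)) k * pochEval (-(i : ℝ) - (n : ℝ)) k) *
          Polynomial.X ^ (i - k)) ∧
    monicFromCoeffs d a = applyPT n d a (Polynomial.X ^ d) ∧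
    monicFromCoeffs d b = applyPT n d b (Polynomial.X ^ d) ∧
    monicFromCoeffs d (rectConvCoeff n d a b) =
      applyPT n d a (applyPT n d b (Polynomial.X ^ d)) ∧
    monicFromCoeffs d (rectConvCoeff n d a b) = applyPT n d a (monicFromCoeffs d b) ∧
    monicFromCoeffs d (rectConvCoeff n d a b) = applyPT n d b (monicFromCoeffs d a) := by
  have hsymm : rectConvCoeff n d a b = rectConvCoeff n d b a :=
    funext (rectConvCoeff_symm n d a b)
  refine ⟨fun i k hk => Trect_iter_X_pow_le n k i hk,
    (applyPT_X_pow n d a).symm, (applyPT_X_pow n d b).symm, ?_, ?_, ?_⟩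
  · rw [applyPT_X_pow n d b]
    exact (applyPT_monic n d a b).symm
  · exact (applyPT_monic n d a b).symm
  · rw [hsymm]
    exact (applyPT_monic n d b a).symm
end
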